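/- Let b'_f(h,s) be the monic generator of the ideal of polynomials b(s) with b(s) δ_h f^s ∈ 𝒟[s](𝒥_{h,f}, f) δ_h f^s, and b_f(δ_h,s) the Bernstein polynomial of f associated with the section δ_h. Then b'_f(h,s) divides b_f(δ_h,s), and b_f(δ_h,s) divides (s+1)·b'_f(h,s). Consequently b'_f(h,s) equals either b_f(δ_h,s) or b_f(δ_h,s)/(s+1). -/

import Mathlib

open Polynomial

noncomputable section

set_option maxHeartbeats 1000000
set_option synthInstance.maxHeartbeats 400000

/-- The ring `𝒪` of germs (polynomial model `ℂ[x₁,…,xₙ]`). -/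
abbrev OO (n : ℕ) := MvPolynomial (Fin n) ℂ
/-- The fraction field of `𝒪`. -/
abbrev KK (n : ℕ) := FractionRing (OO n)

variable {n : ℕ}

/-- Inclusion `𝒪 → K`. -/
def toK {n : ℕ} (r : OO n) : KK n := algebraMap _ _ r

/-- A family of derivations of `K` extending the partial derivatives `∂/∂xᵢ` of `𝒪`. -/
def ExtendsPderiv (d : Fin n → Derivation ℂ (KK n) (KK n)) : Prop :=
  ∀ (i : Fin n) (r : OO n), d i (toK r) = toK (MvPolynomial.pderiv i r)

/-- Coefficientwise action of a derivation of `K` on `K[s]`. -/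
def coeffDer (d : Derivation ℂ (KK n) (KK n)) :
    Derivation ℂ (Polynomial (KK n)) (Polynomial (KK n)) :=
  PolynomialModule.equivPolynomialSelf.compDer d.mapCoeffs

/-- Multiplication operator on `K[s]`. -/
def mulOp (a : Polynomial (KK n)) : Module.End ℂ (Polynomial (KK n)) :=
  LinearMap.mulLeft ℂ a

/-- Twisted partial-derivative operator on `K[s]·f^s`:
`∂ᵢ(g(s) f^s) = ((∂ᵢ g)(s) + s·g(s)·(∂ᵢf/f))·f^s`. -/
def Dop (d : Derivation ℂ (KK n) (KK n)) (f : OO n) : Module.End ℂ (Polynomial (KK n)) :=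
  (coeffDer d).toLinearMap + mulOp (Polynomial.X * Polynomial.C (d (toK f) / toK f))

/-- The image of `𝒟[s]` in `End(K[s]·f^s)`: the ℂ-algebra generated by multiplications by
elements of `𝒪`, multiplication by `s`, and the twisted partials `∂ᵢ`. -/
def WeylS (d : Fin n → Derivation ℂ (KK n) (KK n)) (f : OO n) :
    Subalgebra ℂ (Module.End ℂ (Polynomial (KK n))) :=
  Algebra.adjoin ℂ
    ((Set.range fun r : OO n => mulOp (Polynomial.C (toK r))) ∪ {mulOp Polynomial.X} ∪
      Set.range fun i => Dop (d i) f)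

/-- The `𝒟[s]`-orbit span `𝒟[s]·T` of a set `T ⊆ K[s]·f^s`. -/
def DSpan (d : Fin n → Derivation ℂ (KK n) (KK n)) (f : OO n)
    (T : Set (Polynomial (KK n))) : Submodule ℂ (Polynomial (KK n)) :=
  Submodule.span ℂ {y | ∃ P ∈ WeylS d f, ∃ t ∈ T, y = P t}

/-- The image of `𝒟` in `End(K)` (untwisted action). -/
def Weyl0 (d : Fin n → Derivation ℂ (KK n) (KK n)) : Subalgebra ℂ (Module.End ℂ (KK n)) :=
  Algebra.adjoin ℂ
    ((Set.range fun r : OO n => LinearMap.mulLeft ℂ (toK r)) ∪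
      Set.range fun i => (d i).toLinearMap)

/-- The `𝒟`-orbit span `𝒟·T` of a set `T ⊆ K`. -/
def DSpan0 (d : Fin n → Derivation ℂ (KK n) (KK n)) (T : Set (KK n)) : Submodule ℂ (KK n) :=
  Submodule.span ℂ {y | ∃ P ∈ Weyl0 d, ∃ t ∈ T, y = P t}

/-- The ℂ-submodule `Σ_{g ∈ G} 𝒪[1/g]` of `K`. -/
def locSub (G : Set (OO n)) : Submodule ℂ (KK n) :=
  Submodule.span ℂ {x | ∃ r : OO n, ∃ g ∈ G, ∃ k : ℕ, x = toK r * (toK g)⁻¹ ^ k}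

/-- Polynomials in `s` all of whose coefficients lie in `V`. -/
def polySub (V : Submodule ℂ (KK n)) : Submodule ℂ (Polynomial (KK n)) where
  carrier := {g | ∀ m, g.coeff m ∈ V}
  add_mem' := fun ha hb m => by simpa using V.add_mem (ha m) (hb m)
  zero_mem' := fun m => by rw [Polynomial.coeff_zero]; exact V.zero_mem
  smul_mem' := fun c g hg m => by
    simpa [Polynomial.coeff_smul] using V.smul_mem c (hg m)

/-- Maximal `(p+1)×(p+1)` minor of the Jacobian matrix of `(h₁,…,h_p,f)`
on the columns `cols`. -/
def minorHF {p : ℕ} (h : Fin p → OO n) (f : OO n) (cols : Fin (p + 1) → Fin n) : OO n :=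
  Matrix.det (Matrix.of fun i j =>
    Fin.lastCases (MvPolynomial.pderiv (cols j) f)
      (fun i' => MvPolynomial.pderiv (cols j) (h i')) i)

/-- `p×p` minor of the Jacobian matrix of `h = (h₁,…,h_p)` on the columns `cols`. -/
def minorH {p : ℕ} (h : Fin p → OO n) (cols : Fin p → Fin n) : OO n :=
  Matrix.det (Matrix.of fun i j => MvPolynomial.pderiv (cols j) (h i))

/-- Image of `b(s) ∈ ℂ[s]` in `K[s]`. -/
def bK {n : ℕ} (b : Polynomial ℂ) : Polynomial (KK n) :=
  b.map ((algebraMap (OO n) (KK n)).comp MvPolynomial.C)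


section Aux
variable {n : ℕ}

lemma toK_injective : Function.Injective (toK (n := n)) :=
  IsFractionRing.injective (OO n) (KK n)

lemma toK_ne_zero {r : OO n} (hr : r ≠ 0) : toK r ≠ 0 := by
  intro hh; exact hr (toK_injective (by simpa [toK] using hh))

lemma der_prod {ι : Type*} [DecidableEq ι] (D : Derivation ℂ (KK n) (KK n))
    (s : Finset ι) (g : ι → KK n) :
    D (∏ i ∈ s, g i) = ∑ i ∈ s, (∏ k ∈ s.erase i, g k) * D (g i) := by
  classical
  induction s using Finset.induction_on with
  | empty => simp
  | @insert a s ha ih =>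
    rw [Finset.prod_insert ha, Derivation.leibniz, smul_eq_mul, smul_eq_mul, ih,
      Finset.sum_insert ha, Finset.erase_insert ha, Finset.mul_sum, add_comm]
    congr 1
    refine Finset.sum_congr rfl fun i hi => ?_
    rw [Finset.erase_insert_of_ne (fun hai => ha (by rw [hai]; exact hi)),
      Finset.prod_insert (fun hmem => ha (Finset.mem_of_mem_erase hmem))]
    ring

lemma coeffDer_coeff (d : Derivation ℂ (KK n) (KK n)) (g : Polynomial (KK n)) (m : ℕ) :
    (coeffDer d g).coeff m = d (g.coeff m) := rfl

lemma coeffDer_C (d : Derivation ℂ (KK n) (KK n)) (a : KK n) :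
    coeffDer d (C a) = C (d a) := by
  ext m
  rw [coeffDer_coeff]
  rcases eq_or_ne m 0 with rfl | hm <;> simp [coeff_C, *]

lemma coeffDer_X (d : Derivation ℂ (KK n) (KK n)) :
    coeffDer d (X : Polynomial (KK n)) = 0 := by
  ext m
  rw [coeffDer_coeff]
  rcases eq_or_ne m 1 with rfl | hm
  · simp
  · rw [coeff_X, if_neg (fun hh => hm hh.symm)]; simp

lemma mulOp_apply (a q : Polynomial (KK n)) : mulOp a q = a * q := rfl

lemma Dop_C (d : Derivation ℂ (KK n) (KK n)) (f : OO n) (a : KK n) :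
    Dop d f (C a) = C (d a) + X * C (d (toK f) / toK f * a) := by
  show coeffDer d (C a) + X * C (d (toK f) / toK f) * (C a) = _
  rw [coeffDer_C, mul_assoc, ← Polynomial.C_mul]

lemma Dop_comm_X (d : Derivation ℂ (KK n) (KK n)) (f : OO n) (q : Polynomial (KK n)) :
    Dop d f (X * q) = X * Dop d f q := by
  show coeffDer d (X * q) + X * C (d (toK f) / toK f) * (X * q)
      = X * (coeffDer d q + X * C (d (toK f) / toK f) * q)
  rw [show coeffDer d (X * q) = X • coeffDer d q + q • coeffDer d X from
    Derivation.leibniz _ _ _, coeffDer_X, smul_eq_mul, smul_eq_mul]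
  ring

/-- signed cofactor of the last row -/
def cofac {p : ℕ} (h : Fin p → OO n) (cols : Fin (p + 1) → Fin n) (j : Fin (p + 1)) : OO n :=
  (-1 : OO n) ^ (p + (j : ℕ)) * minorH h (cols ∘ (Fin.succAbove j))

lemma expand_det {p : ℕ} (h : Fin p → OO n) (f₀ : OO n) (cols : Fin (p + 1) → Fin n) :
    minorHF h f₀ cols = ∑ j, cofac h cols j * MvPolynomial.pderiv (cols j) f₀ := by
  rw [minorHF, Matrix.det_succ_row _ (Fin.last p)]
  refine Finset.sum_congr rfl fun j _ => ?_
  rw [cofac, minorH]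
  have hsub : (Matrix.of fun i j' =>
      Fin.lastCases (MvPolynomial.pderiv (cols j') f₀)
        (fun i' => MvPolynomial.pderiv (cols j') (h i')) i).submatrix
        (Fin.last p).succAbove j.succAbove =
      Matrix.of fun i j' => MvPolynomial.pderiv ((cols ∘ j.succAbove) j') (h i) := by
    ext i j'
    simp [Matrix.submatrix_apply, Fin.succAbove_last]
  rw [hsub]
  simp [Fin.val_last]
  ring

lemma cof_h {p : ℕ} (h : Fin p → OO n) (cols : Fin (p + 1) → Fin n) (i0 : Fin p) :
    ∑ j, cofac h cols j * MvPolynomial.pderiv (cols j) (h i0) = 0 := by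
  rw [← expand_det h (h i0) cols, minorHF]
  apply Matrix.det_zero_of_row_eq (i := i0.castSucc) (j := Fin.last p)
  · exact Fin.ne_of_lt (Fin.castSucc_lt_last i0)
  · funext j
    simp

variable {d : Fin n → Derivation ℂ (KK n) (KK n)} {f : OO n}

lemma mulOpC_mem (r : OO n) : mulOp (C (toK r)) ∈ WeylS d f :=
  Algebra.subset_adjoin (Or.inl (Or.inl ⟨r, rfl⟩))

lemma mulOpX_mem : mulOp (X : Polynomial (KK n)) ∈ WeylS d f :=
  Algebra.subset_adjoin (Or.inl (Or.inr rfl))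

lemma Dop_mem (i : Fin n) : Dop (d i) f ∈ WeylS d f :=
  Algebra.subset_adjoin (Or.inr ⟨i, rfl⟩)

lemma mulOpX1_eq : mulOp (X + 1 : Polynomial (KK n)) = mulOp X + 1 := by
  refine LinearMap.ext fun q => ?_
  show (X + 1) * q = X * q + q
  ring

lemma mulOpX1_mem : mulOp (X + 1 : Polynomial (KK n)) ∈ WeylS d f := by
  rw [mulOpX1_eq]
  exact add_mem mulOpX_mem (one_mem _)

lemma weyl_comm_X {P : Module.End ℂ (Polynomial (KK n))} (hP : P ∈ WeylS d f) :
    P * mulOp X = mulOp X * P := by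
  have hle : WeylS d f ≤ Subalgebra.centralizer ℂ {mulOp (X : Polynomial (KK n))} := by
    apply Algebra.adjoin_le
    intro Q hQ
    rw [SetLike.mem_coe, Subalgebra.mem_centralizer_iff]
    rintro g rfl
    rcases hQ with (⟨r, rfl⟩ | rfl) | ⟨i, rfl⟩
    · refine LinearMap.ext fun q => ?_
      show X * (C (toK r) * q) = C (toK r) * (X * q)
      ring
    · rfl
    · refine LinearMap.ext fun q => ?_
      show X * Dop (d i) f q = Dop (d i) f (X * q)
      rw [Dop_comm_X]
  have h2 := hle hP
  rw [Subalgebra.mem_centralizer_iff] at h2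
  exact (h2 _ rfl).symm

lemma weyl_comm_X1 {P : Module.End ℂ (Polynomial (KK n))} (hP : P ∈ WeylS d f) :
    P * mulOp (X + 1) = mulOp (X + 1) * P := by
  rw [mulOpX1_eq, mul_add, mul_one, weyl_comm_X hP, add_mul, one_mul]

/-- the set of values `Q x₀` for `Q ∈ WeylS`, as a submodule -/
def orbit (d : Fin n → Derivation ℂ (KK n) (KK n)) (f : OO n) (x0 : Polynomial (KK n)) :
    Submodule ℂ (Polynomial (KK n)) where
  carrier := {y | ∃ Q ∈ WeylS d f, y = Q x0}
  zero_mem' := ⟨0, zero_mem _, rfl⟩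
  add_mem' := by
    rintro a b ⟨Q1, h1, rfl⟩ ⟨Q2, h2, rfl⟩
    exact ⟨Q1 + Q2, add_mem h1 h2, rfl⟩
  smul_mem' := by
    rintro c a ⟨Q, hQ, rfl⟩
    exact ⟨c • Q, Subalgebra.smul_mem _ hQ c, rfl⟩

lemma mem_orbit_iff {x0 y : Polynomial (KK n)} :
    y ∈ orbit d f x0 ↔ ∃ Q ∈ WeylS d f, y = Q x0 := Iff.rfl

lemma polySub_X1 {V : Submodule ℂ (KK n)} {v : Polynomial (KK n)} (hv : v ∈ polySub V) :
    (X + 1) * v ∈ polySub V := by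
  intro m
  rw [add_mul, one_mul, Polynomial.coeff_add]
  refine V.add_mem ?_ (hv m)
  cases m with
  | zero => rw [Polynomial.mul_coeff_zero, Polynomial.coeff_X_zero, zero_mul]; exact V.zero_mem
  | succ k => rw [Polynomial.coeff_X_mul]; exact hv k

/-- The key identity `(s+1)·m·δ_h·f^s = Δ^h · δ_h f^{s+1}` with `Δ^h ∈ 𝒟[s]`. -/
lemma key_identity (p : ℕ) (hd : ExtendsPderiv d)
    (h : Fin p → OO n) (hh : ∀ i, h i ≠ 0) (hf : f ≠ 0)
    (delta : KK n) (hdelta : delta = (toK (∏ i, h i))⁻¹)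
    (cols : Fin (p + 1) → Fin n) :
    ∃ Δ ∈ WeylS d f,
      Δ (C (toK f * delta)) = (X + 1) * C (toK (minorHF h f cols) * delta) := by
  classical
  set g : OO n := ∏ i, h i with hg
  have hfne : toK f ≠ 0 := toK_ne_zero hf
  refine ⟨∑ j, mulOp (C (toK (cofac h cols j))) * Dop (d (cols j)) f, ?_, ?_⟩
  · exact sum_mem fun j _ => mul_mem (mulOpC_mem _) (Dop_mem _)
  · -- auxiliary scalar identities
    have hsum_h : ∀ i0 : Fin p,
        (∑ j, toK (cofac h cols j) * toK (MvPolynomial.pderiv (cols j) (h i0))) = 0 := by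
      intro i0
      have h1 : toK (∑ j, cofac h cols j * MvPolynomial.pderiv (cols j) (h i0)) = 0 := by
        rw [cof_h]; simp [toK]
      simpa [toK, map_sum, map_mul] using h1
    have hsum_f :
        (∑ j, toK (cofac h cols j) * toK (MvPolynomial.pderiv (cols j) f))
          = toK (minorHF h f cols) := by
      have h1 := congrArg toK (expand_det h f cols)
      simpa [toK, map_sum, map_mul] using h1.symm
    have hdg : ∀ j : Fin (p + 1), d (cols j) (toK g) =
        ∑ i, (∏ k ∈ Finset.univ.erase i, toK (h k)) *
          toK (MvPolynomial.pderiv (cols j) (h i)) := by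
      intro j
      have hprod : toK g = ∏ i, toK (h i) := by simp [toK, map_prod, hg]
      rw [hprod, der_prod]
      exact Finset.sum_congr rfl fun i _ => by rw [hd]
    have hzero : (∑ j, toK (cofac h cols j) * d (cols j) (toK g)) = 0 := by
      have e1 : ∀ j : Fin (p + 1), toK (cofac h cols j) * d (cols j) (toK g)
          = ∑ i, (∏ k ∈ Finset.univ.erase i, toK (h k)) *
              (toK (cofac h cols j) * toK (MvPolynomial.pderiv (cols j) (h i))) := by
        intro j
        rw [hdg j, Finset.mul_sum]
        exact Finset.sum_congr rfl fun i _ => by ring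
      rw [Finset.sum_congr rfl fun j _ => e1 j, Finset.sum_comm]
      refine Finset.sum_eq_zero fun i _ => ?_
      rw [← Finset.mul_sum, hsum_h i, mul_zero]
    have hδ : ∀ j : Fin (p + 1),
        d (cols j) delta = -(delta ^ 2) * d (cols j) (toK g) := by
      intro j
      rw [hdelta, Derivation.leibniz_inv, smul_eq_mul]
    have hDop : ∀ j : Fin (p + 1),
        Dop (d (cols j)) f (C (toK f * delta)) =
          C (toK (MvPolynomial.pderiv (cols j) f) * delta + toK f * d (cols j) delta)
            + X * C (toK (MvPolynomial.pderiv (cols j) f) * delta) := by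
      intro j
      rw [Dop_C]
      have h1 : d (cols j) (toK f * delta)
          = toK (MvPolynomial.pderiv (cols j) f) * delta + toK f * d (cols j) delta := by
        rw [Derivation.leibniz, smul_eq_mul, smul_eq_mul, hd]
        ring
      have h2 : d (cols j) (toK f) / toK f * (toK f * delta)
          = toK (MvPolynomial.pderiv (cols j) f) * delta := by
        rw [hd]
        field_simp
      rw [h1, h2]
    -- the application of the sum operator
    have happ : (∑ j, mulOp (C (toK (cofac h cols j))) * Dop (d (cols j)) f)
          (C (toK f * delta))
        = ∑ j, C (toK (cofac h cols j)) * Dop (d (cols j)) f (C (toK f * delta)) := by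
      rw [LinearMap.sum_apply]
      rfl
    rw [happ]
    have e2 : ∀ j : Fin (p + 1),
        C (toK (cofac h cols j)) * Dop (d (cols j)) f (C (toK f * delta))
        = C (toK (cofac h cols j) *
              (toK (MvPolynomial.pderiv (cols j) f) * delta + toK f * d (cols j) delta))
          + X * C (toK (cofac h cols j) * (toK (MvPolynomial.pderiv (cols j) f) * delta)) := by
      intro j
      rw [hDop j]
      simp only [Polynomial.C_mul, Polynomial.C_add]
      ring
    rw [Finset.sum_congr rfl fun j _ => e2 j, Finset.sum_add_distrib, ← Finset.mul_sum,
      ← map_sum, ← map_sum]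
    have hA : (∑ j, toK (cofac h cols j) *
          (toK (MvPolynomial.pderiv (cols j) f) * delta + toK f * d (cols j) delta))
        = toK (minorHF h f cols) * delta := by
      have e1 : ∀ j : Fin (p + 1), toK (cofac h cols j) *
            (toK (MvPolynomial.pderiv (cols j) f) * delta + toK f * d (cols j) delta)
          = toK (cofac h cols j) * toK (MvPolynomial.pderiv (cols j) f) * delta
            + toK f * -(delta ^ 2) * (toK (cofac h cols j) * d (cols j) (toK g)) := by
        intro j
        rw [hδ j]
        ring
      rw [Finset.sum_congr rfl fun j _ => e1 j, Finset.sum_add_distrib, ← Finset.sum_mul,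
        hsum_f, ← Finset.mul_sum, hzero, mul_zero, add_zero]
    have hB : (∑ j, toK (cofac h cols j) *
          (toK (MvPolynomial.pderiv (cols j) f) * delta))
        = toK (minorHF h f cols) * delta := by
      have e1 : ∀ j : Fin (p + 1), toK (cofac h cols j) *
            (toK (MvPolynomial.pderiv (cols j) f) * delta)
          = toK (cofac h cols j) * toK (MvPolynomial.pderiv (cols j) f) * delta := by
        intro j; ring
      rw [Finset.sum_congr rfl fun j _ => e1 j, ← Finset.sum_mul, hsum_f]
    rw [hA, hB]
    ring

end Aux

variable (p : ℕ)

/-- `b'_f(h,s)` divides `b_f(δ_h,s)`, and `b_f(δ_h,s)` divides `(s+1)·b'_f(h,s)`; consequently `b'_f(h,s)` equals either `b_f(δ_h,s)` or `b_f(δ_h,s)/(s+1)`. -/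
theorem bprime_divides_bernstein (n p : ℕ)
    (d : Fin n → Derivation ℂ (KK n) (KK n)) (hd : ExtendsPderiv d)
    (h : Fin p → OO n) (f : OO n)
    (hh : ∀ i, h i ≠ 0) (hf : f ≠ 0)
    -- `δ_h f^s`, represented by the constant polynomial `1/(h₁⋯h_p)` in `K[s]`
    (delta : KK n) (hdelta : delta = (toK (∏ i, h i))⁻¹)
    -- the ℂ-submodule of `K` corresponding to `Σᵢ 𝒪[1/(f·h₁⋯ȟᵢ⋯h_p)]`, so that the
    -- ambient `𝒟[s]`-module `ℛ_h[1/f][s]·f^s` is `K[s]` modulo `polySub V`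
    (V : Submodule ℂ (KK n))
    (hV : V = locSub {x | ∃ i : Fin p, x = f * ∏ j ∈ Finset.univ.erase i, h j})
    -- membership predicate for the ideal of `b(s)` with
    -- `b(s) δ_h f^s ∈ 𝒟[s](𝒥_{h,f}, f) δ_h f^s`
    (memB' : Polynomial ℂ → Prop)
    (hmemB' : ∀ b : Polynomial ℂ, memB' b ↔
      bK b * Polynomial.C delta ∈
        DSpan d f ({y | ∃ cols : Fin (p + 1) → Fin n, StrictMono cols ∧
            y = Polynomial.C (toK (minorHF h f cols) * delta)} ∪
          {Polynomial.C (toK f * delta)}) ⊔ polySub V)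
    -- membership predicate for the ideal of `b(s)` with
    -- `b(s) δ_h f^s = P(s)·δ_h f^(s+1)` for some `P(s) ∈ 𝒟[s]`
    (memBf : Polynomial ℂ → Prop)
    (hmemBf : ∀ b : Polynomial ℂ, memBf b ↔
      ∃ P ∈ WeylS d f,
        bK b * Polynomial.C delta - P (Polynomial.C (toK f * delta)) ∈ polySub V)
    -- `b'` is the monic generator `b'_f(h,s)`
    (b' : Polynomial ℂ) (hb'1 : b'.Monic) (hb'2 : memB' b')
    (hb'3 : ∀ c : Polynomial ℂ, memB' c → b' ∣ c)
    -- `bf` is the Bernstein polynomial `b_f(δ_h,s)`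
    (bf : Polynomial ℂ) (hbf1 : bf.Monic) (hbf2 : memBf bf)
    (hbf3 : ∀ c : Polynomial ℂ, memBf c → bf ∣ c) :
    b' ∣ bf ∧ bf ∣ (Polynomial.X + 1) * b' := by
  constructor
  · -- b' divides bf
    apply hb'3
    rw [hmemB' bf]
    obtain ⟨P, hP, hv⟩ := (hmemBf bf).mp hbf2
    have hsplit : bK bf * Polynomial.C delta
        = P (Polynomial.C (toK f * delta))
          + (bK bf * Polynomial.C delta - P (Polynomial.C (toK f * delta))) := by ring
    rw [hsplit]
    refine Submodule.add_mem _ (Submodule.mem_sup_left ?_) (Submodule.mem_sup_right hv)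
    exact Submodule.subset_span ⟨P, hP, _, Or.inr rfl, rfl⟩
  · -- bf divides (X+1) * b'
    apply hbf3
    rw [hmemBf]
    obtain ⟨u, hu, v, hv, huv⟩ := Submodule.mem_sup.mp ((hmemB' b').mp hb'2)
    have horb : (X + 1) * u ∈ orbit d f (Polynomial.C (toK f * delta)) := by
      rw [DSpan] at hu
      refine Submodule.span_induction ?_ ?_ ?_ ?_ hu
      · rintro y ⟨P, hP, t, ht, rfl⟩
        have hcomm : (X + 1) * P t = P ((X + 1) * t) := by
          calc (X + 1) * P t
              = (mulOp (X + 1 : Polynomial (KK n)) * P) t := by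
                rw [Module.End.mul_apply, mulOp_apply]
            _ = (P * mulOp (X + 1 : Polynomial (KK n))) t := by rw [weyl_comm_X1 hP]
            _ = P ((X + 1) * t) := by rw [Module.End.mul_apply, mulOp_apply]
        rw [hcomm]
        rcases ht with ⟨cols, _, rfl⟩ | ht
        · obtain ⟨Δ, hΔ, hΔeq⟩ := key_identity p hd h hh hf delta hdelta cols
          rw [← hΔeq]
          exact ⟨P * Δ, mul_mem hP hΔ, (Module.End.mul_apply P Δ _).symm⟩
        · rw [Set.mem_singleton_iff] at ht
          subst ht
          refine ⟨P * mulOp (X + 1 : Polynomial (KK n)), mul_mem hP mulOpX1_mem, ?_⟩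
          rw [Module.End.mul_apply, mulOp_apply]
      · rw [mul_zero]; exact Submodule.zero_mem _
      · intro x y _ _ hx hy
        rw [mul_add]; exact Submodule.add_mem _ hx hy
      · intro a x _ hx
        rw [mul_smul_comm]; exact Submodule.smul_mem _ a hx
    rw [mem_orbit_iff] at horb
    obtain ⟨Q, hQ, hQeq⟩ := horb
    refine ⟨Q, hQ, ?_⟩
    have hXu : (X + 1) * u = Q (Polynomial.C (toK f * delta)) := hQeq
    have hbk : bK ((Polynomial.X + 1) * b') = ((X : Polynomial (KK n)) + 1) * bK b' := by
      simp [bK, Polynomial.map_mul, Polynomial.map_add, Polynomial.map_one, Polynomial.map_X]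
    have hkey : bK ((Polynomial.X + 1) * b') * Polynomial.C delta
        - Q (Polynomial.C (toK f * delta)) = (X + 1) * v := by
      rw [hbk, mul_assoc, ← huv, ← hXu]
      ring
    rw [hkey]
    exact polySub_X1 hv
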